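/- Let X be a Markov chain with finite state space S of size n and stationary distribution π, and suppose ψ : ℕ → ℝ is such that P_z(τ(y) = u) ≤ ψ(u) for all states z, y and all integers u > 0. Then for all states x, y and integers t > s > 0, P_x(τ(y) = t) ≤ d_x(s)·ψ(t − s) + 1/(t − s), where d_x(s) is the total variation distance between p^s(x, ·) and π. Moreover, if t > 2·t_mix(1/4)·⌈log₂ n⌉, then P_x(τ(y) = t) ≤ 4/t. -/

import Mathlib

open Finset

/-- A (row-)stochastic transition matrix: the transition kernel of a Markov chain
on the finite state space `S`. -/
def IsStochastic {S : Type*} [Fintype S] (p : Matrix S S ℝ) : Prop :=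
  (∀ a b, 0 ≤ p a b) ∧ ∀ a, ∑ b, p a b = 1

/-- `π` is a stationary distribution for the transition matrix `p`. -/
def IsStationaryDistr {S : Type*} [Fintype S] (p : Matrix S S ℝ) (π : S → ℝ) : Prop :=
  (∀ a, 0 ≤ π a) ∧ (∑ a, π a = 1) ∧ ∀ b, ∑ a, π a * p a b = π b

/-- The chain with transition matrix `p` is reversible with respect to `π`. -/
def IsReversible {S : Type*} [Fintype S] (p : Matrix S S ℝ) (π : S → ℝ) : Prop :=
  ∀ a b, π a * p a b = π b * p b a

/-- The probability weight of a finite trajectory `z 0, z 1, …, z m` of the chain. -/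
noncomputable def pathWeight {S : Type*} (p : Matrix S S ℝ) {m : ℕ} (z : Fin (m + 1) → S) : ℝ :=
  ∏ i : Fin m, p (z i.castSucc) (z i.succ)

open scoped Classical in
/-- `P_x(A)` for an event `A` depending on the trajectory `X_0, X_1, …, X_m`
of the chain started at `x`. -/
noncomputable def eventProb {S : Type*} [Fintype S] (p : Matrix S S ℝ) (x : S) (m : ℕ)
    (A : (Fin (m + 1) → S) → Prop) : ℝ :=
  ∑ z : Fin (m + 1) → S, if z 0 = x ∧ A z then pathWeight p z else 0

/-- `P_x(τ(y) = t)`: the probability that the chain started at `x` first visits `y`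
exactly at time `t`. -/
noncomputable def hitProbEq {S : Type*} [Fintype S] (p : Matrix S S ℝ) (x y : S) (t : ℕ) : ℝ :=
  eventProb p x t fun z => z (Fin.last t) = y ∧ ∀ i : Fin (t + 1), (i : ℕ) < t → z i ≠ y

/-- `d_x(s)`: the total variation distance between `p^s(x, ·)` and `π`. -/
noncomputable def tvDist {S : Type*} [Fintype S] [DecidableEq S]
    (p : Matrix S S ℝ) (π : S → ℝ) (x : S) (s : ℕ) : ℝ :=
  (1 / 2) * ∑ z, |(p ^ s) x z - π z|

section Aux
open scoped Classical
variable {S : Type*} [Fintype S] [DecidableEq S]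

lemma pathWeight_nonneg {p : Matrix S S ℝ} (hp0 : ∀ a b, 0 ≤ p a b) {m : ℕ}
    (z : Fin (m + 1) → S) : 0 ≤ pathWeight p z :=
  Finset.prod_nonneg fun _ _ => hp0 _ _

lemma hitProbEq_nonneg {p : Matrix S S ℝ} (hp0 : ∀ a b, 0 ≤ p a b) (x y : S) (t : ℕ) :
    0 ≤ hitProbEq p x y t := by
  refine Finset.sum_nonneg fun z _ => ?_
  split_ifs
  · exact pathWeight_nonneg hp0 z
  · exact le_refl 0

lemma hitProbEq_zero (p : Matrix S S ℝ) (x y : S) :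
    hitProbEq p x y 0 = if x = y then 1 else 0 := by
  rw [hitProbEq, eventProb]
  rw [Fintype.sum_equiv (Equiv.funUnique (Fin 1) S) _
      (fun a : S => if a = x ∧ a = y then 1 else 0) ?_]
  · by_cases h : x = y
    · subst h; simp
    · rw [Finset.sum_eq_zero]
      · simp [h]
      intro a _
      rw [if_neg]
      rintro ⟨rfl, rfl⟩; exact h rfl
  · intro z
    have hpw : pathWeight p z = 1 := by
      unfold pathWeight; simp
    have hiff : (z 0 = x ∧ z (Fin.last 0) = y ∧ ∀ i : Fin (0 + 1), (i : ℕ) < 0 → z i ≠ y)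
        ↔ (z 0 = x ∧ z 0 = y) := by
      constructor
      · rintro ⟨h1, h2, -⟩; exact ⟨h1, h2⟩
      · rintro ⟨h1, h2⟩
        exact ⟨h1, h2, fun i hi => absurd hi (Nat.not_lt_zero _)⟩
    simp only [hpw, hiff]
    all_goals rfl

lemma hitProbEq_succ (p : Matrix S S ℝ) (x y : S) (u : ℕ) :
    hitProbEq p x y (u + 1)
      = if x = y then 0 else ∑ w, p x w * hitProbEq p w y u := by
  rw [hitProbEq, eventProb, ← Equiv.sum_comp (Fin.consEquiv fun _ : Fin (u + 1 + 1) => S),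
    Fintype.sum_prod_type]
  have hpc : ∀ (a : S) (g : Fin (u + 1) → S),
      ((Fin.consEquiv fun _ : Fin (u + 1 + 1) => S) (a, g)) = Fin.cons a g := fun a g => rfl
  simp only [hpc]
  have hterm : ∀ (a : S) (g : Fin (u + 1) → S),
      (if (Fin.cons a g : Fin (u + 1 + 1) → S) 0 = x ∧
          ((Fin.cons a g : Fin (u + 1 + 1) → S) (Fin.last (u + 1)) = y ∧
            ∀ i : Fin (u + 1 + 1), (i : ℕ) < u + 1 → (Fin.cons a g : Fin (u + 1 + 1) → S) i ≠ y)
        then pathWeight p (Fin.cons a g : Fin (u + 1 + 1) → S) else 0)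
      = if a = x ∧ (a ≠ y ∧ (g (Fin.last u) = y ∧ ∀ i : Fin (u + 1), (i : ℕ) < u → g i ≠ y))
        then p a (g 0) * pathWeight p g else 0 := by
    intro a g
    have hpw : pathWeight p (Fin.cons a g : Fin (u + 1 + 1) → S) = p a (g 0) * pathWeight p g := by
      unfold pathWeight
      rw [Fin.prod_univ_succ]
      have h1 : ∀ i : Fin u, p ((Fin.cons a g : Fin (u + 1 + 1) → S) (i.succ).castSucc)
          ((Fin.cons a g : Fin (u + 1 + 1) → S) (i.succ).succ) = p (g i.castSucc) (g i.succ) := by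
        intro i
        rw [← Fin.succ_castSucc, Fin.cons_succ, Fin.cons_succ]
      rw [Finset.prod_congr rfl fun i _ => h1 i]
      have h0 : p ((Fin.cons a g : Fin (u + 1 + 1) → S) ((0 : Fin (u + 1)).castSucc))
          ((Fin.cons a g : Fin (u + 1 + 1) → S) ((0 : Fin (u + 1)).succ)) = p a (g 0) := by
        rw [Fin.castSucc_zero, Fin.cons_zero, Fin.cons_succ]
      rw [h0]
    have hiff : ((Fin.cons a g : Fin (u + 1 + 1) → S) 0 = x ∧
          ((Fin.cons a g : Fin (u + 1 + 1) → S) (Fin.last (u + 1)) = y ∧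
            ∀ i : Fin (u + 1 + 1), (i : ℕ) < u + 1 → (Fin.cons a g : Fin (u + 1 + 1) → S) i ≠ y))
        ↔ (a = x ∧ (a ≠ y ∧ (g (Fin.last u) = y ∧ ∀ i : Fin (u + 1), (i : ℕ) < u → g i ≠ y))) := by
      constructor
      · rintro ⟨h1, h2, h3⟩
        rw [Fin.cons_zero] at h1
        refine ⟨h1, ?_, ?_, ?_⟩
        · have h4 := h3 0 (Nat.succ_pos u)
          rwa [Fin.cons_zero] at h4
        · rw [← Fin.succ_last, Fin.cons_succ] at h2; exact h2
        · intro i hi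
          have h4 := h3 i.succ (by rw [Fin.val_succ]; omega)
          rwa [Fin.cons_succ] at h4
      · rintro ⟨h1, hne, hlast, hmid⟩
        refine ⟨by rw [Fin.cons_zero]; exact h1,
          by rw [← Fin.succ_last, Fin.cons_succ]; exact hlast, ?_⟩
        intro i hi
        rcases Fin.eq_zero_or_eq_succ i with h0 | ⟨j, rfl⟩
        · subst h0; rw [Fin.cons_zero]; exact hne
        · rw [Fin.cons_succ]
          rw [Fin.val_succ] at hi
          exact hmid j (by omega)
    simp only [hpw, hiff]
    all_goals rfl
  rw [Finset.sum_congr rfl fun a _ => Finset.sum_congr rfl fun g _ => hterm a g]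
  have collapse : ∀ a : S,
      (∑ g : Fin (u + 1) → S, if a = x ∧ (a ≠ y ∧ (g (Fin.last u) = y ∧
          ∀ i : Fin (u + 1), (i : ℕ) < u → g i ≠ y)) then p a (g 0) * pathWeight p g else 0)
      = if a = x then (∑ g : Fin (u + 1) → S, if (a ≠ y ∧ (g (Fin.last u) = y ∧
          ∀ i : Fin (u + 1), (i : ℕ) < u → g i ≠ y)) then p a (g 0) * pathWeight p g else 0)
          else 0 := by
    intro a
    by_cases ha : a = x
    · rw [if_pos ha]
      refine Finset.sum_congr rfl fun g _ => ?_
      simp [ha]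
    · rw [if_neg ha, Finset.sum_eq_zero]
      intro g _
      rw [if_neg]
      rintro ⟨h1, -⟩; exact ha h1
  rw [Finset.sum_congr rfl fun a _ => collapse a, Finset.sum_ite_eq' Finset.univ x, if_pos (Finset.mem_univ x)]
  by_cases hxy : x = y
  · rw [if_pos hxy, Finset.sum_eq_zero]
    intro g _
    rw [if_neg]
    rintro ⟨h1, -⟩; exact h1 hxy
  · rw [if_neg hxy]
    have hR : ∀ w : S, p x w * hitProbEq p w y u
        = ∑ g : Fin (u + 1) → S, if g 0 = w ∧ (g (Fin.last u) = y ∧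
            ∀ i : Fin (u + 1), (i : ℕ) < u → g i ≠ y) then p x w * pathWeight p g else 0 := by
      intro w
      rw [hitProbEq, eventProb, Finset.mul_sum]
      refine Finset.sum_congr rfl fun g _ => ?_
      rw [mul_ite, mul_zero]
      split_ifs <;> rfl
    rw [Finset.sum_congr rfl fun w _ => hR w, Finset.sum_comm]
    refine Finset.sum_congr rfl fun g _ => ?_
    have : ∀ w : S, (if g 0 = w ∧ (g (Fin.last u) = y ∧
          ∀ i : Fin (u + 1), (i : ℕ) < u → g i ≠ y) then p x w * pathWeight p g else 0)
        = if g 0 = w then (if (g (Fin.last u) = y ∧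
          ∀ i : Fin (u + 1), (i : ℕ) < u → g i ≠ y) then p x w * pathWeight p g else 0) else 0 := by
      intro w
      by_cases hw : g 0 = w
      · simp [hw]
      · simp [hw]
    rw [Finset.sum_congr rfl fun w _ => this w, Finset.sum_ite_eq Finset.univ (g 0), if_pos (Finset.mem_univ (g 0))]
    by_cases hC : (g (Fin.last u) = y ∧ ∀ i : Fin (u + 1), (i : ℕ) < u → g i ≠ y)
    · rw [if_pos hC, if_pos ⟨hxy, hC⟩]
    · rw [if_neg hC, if_neg]
      rintro ⟨-, h2⟩; exact hC h2

lemma pow_entry_nonneg {p : Matrix S S ℝ} (hp : IsStochastic p) (s : ℕ) (x z : S) :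
    0 ≤ (p ^ s) x z := by
  induction s generalizing x z with
  | zero => rw [pow_zero, Matrix.one_apply]; split_ifs <;> norm_num
  | succ s ih =>
    rw [pow_succ, Matrix.mul_apply]
    exact Finset.sum_nonneg fun w _ => mul_nonneg (ih x w) (hp.1 w z)

lemma pow_rowsum {p : Matrix S S ℝ} (hp : IsStochastic p) (s : ℕ) (x : S) :
    ∑ z, (p ^ s) x z = 1 := by
  induction s generalizing x with
  | zero =>
    simp [Matrix.one_apply]
  | succ s ih =>
    simp only [pow_succ, Matrix.mul_apply]
    rw [Finset.sum_comm]
    have : ∀ w, ∑ z, (p ^ s) x w * p w z = (p ^ s) x w := by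
      intro w
      rw [← Finset.mul_sum, hp.2 w, mul_one]
    rw [Finset.sum_congr rfl fun w _ => this w, ih x]

lemma hit_succ_le {p : Matrix S S ℝ} (hp : IsStochastic p) (x y : S) (u : ℕ) :
    hitProbEq p x y (u + 1) ≤ ∑ w, p x w * hitProbEq p w y u := by
  rw [hitProbEq_succ]
  split_ifs
  · exact Finset.sum_nonneg fun w _ =>
      mul_nonneg (hp.1 x w) (hitProbEq_nonneg hp.1 w y u)
  · exact le_refl _

lemma hit_cumsum_le {p : Matrix S S ℝ} (hp : IsStochastic p) (y : S) (m : ℕ) :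
    ∀ z : S, (∑ u ∈ Finset.range (m + 1), hitProbEq p z y u) ≤ 1 := by
  induction m with
  | zero =>
    intro z
    rw [Finset.sum_range_one, hitProbEq_zero]
    split_ifs <;> norm_num
  | succ m ih =>
    intro z
    rw [Finset.sum_range_succ']
    by_cases hz : z = y
    · have h0 : hitProbEq p z y 0 = 1 := by rw [hitProbEq_zero, if_pos hz]
      have hrest : ∀ u, hitProbEq p z y (u + 1) = 0 := fun u => by
        rw [hitProbEq_succ, if_pos hz]
      rw [h0, Finset.sum_congr rfl fun u _ => hrest u]
      simp
    · have h0 : hitProbEq p z y 0 = 0 := by rw [hitProbEq_zero, if_neg hz]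
      have hrest : ∀ u, hitProbEq p z y (u + 1) = ∑ w, p z w * hitProbEq p w y u :=
        fun u => by rw [hitProbEq_succ, if_neg hz]
      rw [h0, add_zero, Finset.sum_congr rfl fun u _ => hrest u, Finset.sum_comm]
      calc ∑ w, ∑ u ∈ Finset.range (m + 1), p z w * hitProbEq p w y u
          = ∑ w, p z w * ∑ u ∈ Finset.range (m + 1), hitProbEq p w y u := by
            refine Finset.sum_congr rfl fun w _ => ?_
            rw [Finset.mul_sum]
        _ ≤ ∑ w, p z w * 1 := by
            refine Finset.sum_le_sum fun w _ => ?_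
            exact mul_le_mul_of_nonneg_left (ih w) (hp.1 z w)
        _ = 1 := by simp only [mul_one]; exact hp.2 z

lemma hit_window_le {p : Matrix S S ℝ} (hp : IsStochastic p) (y : S) (u : ℕ) (z : S) :
    (∑ v ∈ Finset.Icc 1 u, hitProbEq p z y v) ≤ 1 := by
  refine le_trans ?_ (hit_cumsum_le hp y u z)
  refine Finset.sum_le_sum_of_subset_of_nonneg ?_ ?_
  · intro v hv
    rw [Finset.mem_Icc] at hv
    rw [Finset.mem_range]
    omega
  · intro v _ _
    exact hitProbEq_nonneg hp.1 z y v

section Psi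
variable [Nonempty S]

noncomputable def hitSup (p : Matrix S S ℝ) (y : S) (u : ℕ) : ℝ :=
  Finset.univ.sup' Finset.univ_nonempty fun z => hitProbEq p z y u

lemma le_hitSup {p : Matrix S S ℝ} (y : S) (u : ℕ) (z : S) :
    hitProbEq p z y u ≤ hitSup p y u := by
  unfold hitSup
  exact Finset.le_sup' (fun w => hitProbEq p w y u) (Finset.mem_univ z)

lemma hitSup_nonneg {p : Matrix S S ℝ} (hp : IsStochastic p) (y : S) (u : ℕ) :
    0 ≤ hitSup p y u :=
  le_trans (hitProbEq_nonneg hp.1 (Classical.arbitrary S) y u)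
    (le_hitSup y u (Classical.arbitrary S))

lemma hitSup_succ_le {p : Matrix S S ℝ} (hp : IsStochastic p) (y : S) (u : ℕ) :
    hitSup p y (u + 1) ≤ hitSup p y u := by
  refine Finset.sup'_le _ _ fun z _ => ?_
  calc hitProbEq p z y (u + 1) ≤ ∑ w, p z w * hitProbEq p w y u := hit_succ_le hp z y u
    _ ≤ ∑ w, p z w * hitSup p y u := by
        refine Finset.sum_le_sum fun w _ => ?_
        exact mul_le_mul_of_nonneg_left (le_hitSup y u w) (hp.1 z w)
    _ = hitSup p y u := by rw [← Finset.sum_mul, hp.2 z, one_mul]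

lemma hitSup_antitone {p : Matrix S S ℝ} (hp : IsStochastic p) (y : S) :
    ∀ v u : ℕ, v ≤ u → hitSup p y u ≤ hitSup p y v := by
  intro v u hvu
  induction u with
  | zero => rw [Nat.le_zero.mp hvu]
  | succ u ih =>
    rcases Nat.lt_or_ge v (u + 1) with h | h
    · exact le_trans (hitSup_succ_le hp y u) (ih (by omega))
    · rw [le_antisymm hvu h]

lemma hitSup_le_card_div {p : Matrix S S ℝ} (hp : IsStochastic p) (y : S) (u : ℕ)
    (hu : 0 < u) : hitSup p y u ≤ (Fintype.card S : ℝ) / u := by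
  rw [le_div_iff₀ (by exact_mod_cast hu : (0:ℝ) < u)]
  calc hitSup p y u * u = ∑ v ∈ Finset.Icc 1 u, hitSup p y u := by
        rw [Finset.sum_const, Nat.card_Icc, nsmul_eq_mul]
        push_cast
        ring
    _ ≤ ∑ v ∈ Finset.Icc 1 u, hitSup p y v := by
        refine Finset.sum_le_sum fun v hv => ?_
        rw [Finset.mem_Icc] at hv
        exact hitSup_antitone hp y v u hv.2
    _ ≤ ∑ v ∈ Finset.Icc 1 u, ∑ z, hitProbEq p z y v := by
        refine Finset.sum_le_sum fun v _ => ?_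
        refine Finset.sup'_le _ _ fun z _ => ?_
        exact Finset.single_le_sum (fun w _ => hitProbEq_nonneg hp.1 w y v) (Finset.mem_univ z)
    _ = ∑ z, ∑ v ∈ Finset.Icc 1 u, hitProbEq p z y v := Finset.sum_comm
    _ ≤ ∑ _z : S, (1:ℝ) := Finset.sum_le_sum fun z _ => hit_window_le hp y u z
    _ = (Fintype.card S : ℝ) := by simp

lemma hit_le_card_div {p : Matrix S S ℝ} (hp : IsStochastic p) (x y : S) (u : ℕ)
    (hu : 0 < u) : hitProbEq p x y u ≤ (Fintype.card S : ℝ) / u :=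
  le_trans (le_hitSup y u x) (hitSup_le_card_div hp y u hu)

end Psi

lemma hit_le_pow_sum {p : Matrix S S ℝ} (hp : IsStochastic p) (y : S) (s : ℕ) :
    ∀ (m : ℕ) (x : S), hitProbEq p x y (s + m) ≤ ∑ z, (p ^ s) x z * hitProbEq p z y m := by
  induction s with
  | zero =>
    intro m x
    rw [pow_zero, zero_add]
    have : ∀ z, ((1 : Matrix S S ℝ)) x z * hitProbEq p z y m
        = if x = z then hitProbEq p z y m else 0 := by
      intro z
      rw [Matrix.one_apply]
      split_ifs <;> simp
    rw [Finset.sum_congr rfl fun z _ => this z, Finset.sum_ite_eq Finset.univ x,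
      if_pos (Finset.mem_univ x)]
  | succ s ih =>
    intro m x
    have hstep : s + 1 + m = (s + m) + 1 := by omega
    rw [hstep]
    calc hitProbEq p x y ((s + m) + 1) ≤ ∑ w, p x w * hitProbEq p w y (s + m) :=
          hit_succ_le hp x y (s + m)
      _ ≤ ∑ w, p x w * ∑ z, (p ^ s) w z * hitProbEq p z y m := by
          refine Finset.sum_le_sum fun w _ => ?_
          exact mul_le_mul_of_nonneg_left (ih m w) (hp.1 x w)
      _ = ∑ w, ∑ z, p x w * ((p ^ s) w z * hitProbEq p z y m) :=
          Finset.sum_congr rfl fun w _ => Finset.mul_sum _ _ _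
      _ = ∑ z, ∑ w, p x w * ((p ^ s) w z * hitProbEq p z y m) := Finset.sum_comm
      _ = ∑ z, (p ^ (s + 1)) x z * hitProbEq p z y m := by
          refine Finset.sum_congr rfl fun z _ => ?_
          rw [pow_succ', Matrix.mul_apply, Finset.sum_mul]
          exact Finset.sum_congr rfl fun w _ => (mul_assoc _ _ _).symm

section Stationary
variable {p : Matrix S S ℝ} {π : S → ℝ}

lemma pi_pow_invariant (hst : IsStationaryDistr p π) (t : ℕ) (w : S) :
    ∑ z, π z * (p ^ t) z w = π w := by
  induction t generalizing w with
  | zero =>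
    have : ∀ z, π z * (1 : Matrix S S ℝ) z w = if z = w then π z else 0 := by
      intro z
      rw [Matrix.one_apply]
      split_ifs <;> simp
    rw [pow_zero, Finset.sum_congr rfl fun z _ => this z,
      Finset.sum_ite_eq' Finset.univ w, if_pos (Finset.mem_univ w)]
  | succ t ih =>
    calc ∑ z, π z * (p ^ (t + 1)) z w
        = ∑ z, ∑ v, π z * ((p ^ t) z v * p v w) := by
          refine Finset.sum_congr rfl fun z _ => ?_
          rw [pow_succ, Matrix.mul_apply, Finset.mul_sum]
      _ = ∑ v, ∑ z, π z * ((p ^ t) z v * p v w) := Finset.sum_comm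
      _ = ∑ v, (∑ z, π z * (p ^ t) z v) * p v w := by
          refine Finset.sum_congr rfl fun v _ => ?_
          rw [Finset.sum_mul]
          exact Finset.sum_congr rfl fun z _ => (mul_assoc _ _ _).symm
      _ = ∑ v, π v * p v w := Finset.sum_congr rfl fun v _ => by rw [ih v]
      _ = π w := hst.2.2 w

lemma statTail_succ_le (hp : IsStochastic p) (hst : IsStationaryDistr p π) (y : S) (u : ℕ) :
    ∑ z, π z * hitProbEq p z y (u + 1) ≤ ∑ z, π z * hitProbEq p z y u := by
  calc ∑ z, π z * hitProbEq p z y (u + 1)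
      ≤ ∑ z, π z * ∑ w, p z w * hitProbEq p w y u := by
        refine Finset.sum_le_sum fun z _ => ?_
        exact mul_le_mul_of_nonneg_left (hit_succ_le hp z y u) (hst.1 z)
    _ = ∑ z, ∑ w, π z * (p z w * hitProbEq p w y u) :=
        Finset.sum_congr rfl fun z _ => Finset.mul_sum _ _ _
    _ = ∑ w, ∑ z, π z * (p z w * hitProbEq p w y u) := Finset.sum_comm
    _ = ∑ w, (∑ z, π z * p z w) * hitProbEq p w y u := by
        refine Finset.sum_congr rfl fun w _ => ?_
        rw [Finset.sum_mul]
        exact Finset.sum_congr rfl fun z _ => (mul_assoc _ _ _).symm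
    _ = ∑ w, π w * hitProbEq p w y u :=
        Finset.sum_congr rfl fun w _ => by rw [hst.2.2 w]

lemma statTail_antitone (hp : IsStochastic p) (hst : IsStationaryDistr p π) (y : S) :
    ∀ v u : ℕ, v ≤ u →
      ∑ z, π z * hitProbEq p z y u ≤ ∑ z, π z * hitProbEq p z y v := by
  intro v u hvu
  induction u with
  | zero => rw [Nat.le_zero.mp hvu]
  | succ u ih =>
    rcases Nat.lt_or_ge v (u + 1) with h | h
    · exact le_trans (statTail_succ_le hp hst y u) (ih (by omega))
    · rw [le_antisymm hvu h]

lemma statTail_le (hp : IsStochastic p) (hst : IsStationaryDistr p π) (y : S) (m : ℕ)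
    (hm : 0 < m) : ∑ z, π z * hitProbEq p z y m ≤ 1 / m := by
  rw [le_div_iff₀ (by exact_mod_cast hm : (0:ℝ) < m)]
  calc (∑ z, π z * hitProbEq p z y m) * m
      = ∑ v ∈ Finset.Icc 1 m, ∑ z, π z * hitProbEq p z y m := by
        rw [Finset.sum_const, Nat.card_Icc, nsmul_eq_mul]
        push_cast
        ring
    _ ≤ ∑ v ∈ Finset.Icc 1 m, ∑ z, π z * hitProbEq p z y v := by
        refine Finset.sum_le_sum fun v hv => ?_
        rw [Finset.mem_Icc] at hv
        exact statTail_antitone hp hst y v m hv.2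
    _ = ∑ z, π z * ∑ v ∈ Finset.Icc 1 m, hitProbEq p z y v := by
        rw [Finset.sum_comm]
        exact Finset.sum_congr rfl fun z _ => (Finset.mul_sum _ _ _).symm
    _ ≤ ∑ z, π z * 1 := by
        refine Finset.sum_le_sum fun z _ => ?_
        exact mul_le_mul_of_nonneg_left (hit_window_le hp y m z) (hst.1 z)
    _ = 1 := by simp only [mul_one]; exact hst.2.1

/-- The core "part 1" inequality. -/
lemma core_bound (hp : IsStochastic p) (hst : IsStationaryDistr p π) (x y : S) (s m : ℕ)
    (hm : 0 < m) (B : ℝ) (hB : ∀ z, hitProbEq p z y m ≤ B) (hB0 : 0 ≤ B) :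
    hitProbEq p x y (s + m) ≤ tvDist p π x s * B + 1 / m := by
  have hsum0 : ∑ z, ((p ^ s) x z - π z) = 0 := by
    rw [Finset.sum_sub_distrib, pow_rowsum hp s x, hst.2.1, sub_self]
  have habs : ∑ z, max ((p ^ s) x z - π z) 0 = tvDist p π x s := by
    rw [tvDist]
    have : ∀ z, max ((p ^ s) x z - π z) 0
        = (|(p ^ s) x z - π z| + ((p ^ s) x z - π z)) / 2 := by
      intro z
      rcases le_or_gt 0 ((p ^ s) x z - π z) with h | h
      · rw [max_eq_left h, abs_of_nonneg h]; ring
      · rw [max_eq_right h.le, abs_of_neg h]; ring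
    rw [Finset.sum_congr rfl fun z _ => this z]
    rw [show (∑ z, (|(p ^ s) x z - π z| + ((p ^ s) x z - π z)) / 2)
        = ((∑ z, |(p ^ s) x z - π z|) + ∑ z, ((p ^ s) x z - π z)) / 2 by
      rw [← Finset.sum_add_distrib, ← Finset.sum_div]]
    rw [hsum0, add_zero]
    ring
  calc hitProbEq p x y (s + m)
      ≤ ∑ z, (p ^ s) x z * hitProbEq p z y m := hit_le_pow_sum hp y s m x
    _ = ∑ z, ((p ^ s) x z - π z) * hitProbEq p z y m
          + ∑ z, π z * hitProbEq p z y m := by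
        rw [← Finset.sum_add_distrib]
        refine Finset.sum_congr rfl fun z _ => ?_
        ring
    _ ≤ ∑ z, max ((p ^ s) x z - π z) 0 * B + 1 / m := by
        refine add_le_add ?_ (statTail_le hp hst y m hm)
        refine Finset.sum_le_sum fun z _ => ?_
        calc ((p ^ s) x z - π z) * hitProbEq p z y m
            ≤ max ((p ^ s) x z - π z) 0 * hitProbEq p z y m :=
              mul_le_mul_of_nonneg_right (le_max_left _ _) (hitProbEq_nonneg hp.1 z y m)
          _ ≤ max ((p ^ s) x z - π z) 0 * B :=
              mul_le_mul_of_nonneg_left (hB z) (le_max_right _ _)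
    _ = tvDist p π x s * B + 1 / m := by rw [← Finset.sum_mul, habs]

end Stationary

section Pair
variable [Nonempty S] {p : Matrix S S ℝ} {π : S → ℝ}

noncomputable def pairDist (p : Matrix S S ℝ) (t : ℕ) (a b : S) : ℝ :=
  (1 / 2) * ∑ w, |(p ^ t) a w - (p ^ t) b w|

noncomputable def Dmax (p : Matrix S S ℝ) (t : ℕ) : ℝ :=
  Finset.univ.sup' Finset.univ_nonempty fun q : S × S => pairDist p t q.1 q.2

lemma pairDist_nonneg (p : Matrix S S ℝ) (t : ℕ) (a b : S) : 0 ≤ pairDist p t a b :=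
  mul_nonneg (by norm_num) (Finset.sum_nonneg fun w _ => abs_nonneg _)

lemma pairDist_le_Dmax (p : Matrix S S ℝ) (t : ℕ) (a b : S) :
    pairDist p t a b ≤ Dmax p t := by
  unfold Dmax
  exact Finset.le_sup' (fun q : S × S => pairDist p t q.1 q.2) (Finset.mem_univ (a, b))

lemma Dmax_nonneg (p : Matrix S S ℝ) (t : ℕ) : 0 ≤ Dmax p t :=
  le_trans (pairDist_nonneg p t (Classical.arbitrary S) (Classical.arbitrary S))
    (pairDist_le_Dmax p t _ _)

lemma pairDist_le_one (hp : IsStochastic p) (t : ℕ) (a b : S) : pairDist p t a b ≤ 1 := by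
  unfold pairDist
  have h : ∑ w, |(p ^ t) a w - (p ^ t) b w| ≤ ∑ w, ((p ^ t) a w + (p ^ t) b w) := by
    refine Finset.sum_le_sum fun w _ => ?_
    calc |(p ^ t) a w - (p ^ t) b w| ≤ |(p ^ t) a w| + |(p ^ t) b w| := by
          rw [sub_eq_add_neg]
          exact (abs_add_le _ _).trans (by rw [abs_neg])
      _ = (p ^ t) a w + (p ^ t) b w := by
          rw [abs_of_nonneg (pow_entry_nonneg hp t a w),
            abs_of_nonneg (pow_entry_nonneg hp t b w)]
  calc (1/2 : ℝ) * ∑ w, |(p ^ t) a w - (p ^ t) b w|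
      ≤ (1/2) * ∑ w, ((p ^ t) a w + (p ^ t) b w) := by linarith
    _ = 1 := by
        rw [Finset.sum_add_distrib, pow_rowsum hp t a, pow_rowsum hp t b]
        norm_num

lemma Dmax_le_one (hp : IsStochastic p) (t : ℕ) : Dmax p t ≤ 1 :=
  Finset.sup'_le _ _ fun q _ => pairDist_le_one hp t q.1 q.2

lemma tv_le_Dmax (hst : IsStationaryDistr p π) (x : S) (t : ℕ) :
    tvDist p π x t ≤ Dmax p t := by
  rw [tvDist]
  have hpt : ∀ w, (p ^ t) x w - π w = ∑ z, π z * ((p ^ t) x w - (p ^ t) z w) := by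
    intro w
    have h1 : ∑ z, π z * ((p ^ t) x w - (p ^ t) z w)
        = (∑ z, π z) * (p ^ t) x w - ∑ z, π z * (p ^ t) z w := by
      rw [Finset.sum_mul, ← Finset.sum_sub_distrib]
      refine Finset.sum_congr rfl fun z _ => ?_
      ring
    rw [h1, hst.2.1, pi_pow_invariant hst t w, one_mul]
  calc (1/2 : ℝ) * ∑ w, |(p ^ t) x w - π w|
      ≤ (1/2) * ∑ w, ∑ z, π z * |(p ^ t) x w - (p ^ t) z w| := by
        have : ∀ w, |(p ^ t) x w - π w| ≤ ∑ z, π z * |(p ^ t) x w - (p ^ t) z w| := by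
          intro w
          rw [hpt w]
          refine le_trans (Finset.abs_sum_le_sum_abs _ _) ?_
          refine Finset.sum_le_sum fun z _ => ?_
          rw [abs_mul, abs_of_nonneg (hst.1 z)]
        have h2 := Finset.sum_le_sum fun w (_ : w ∈ Finset.univ) => this w
        linarith
    _ = ∑ z, π z * pairDist p t x z := by
        have e1 : ∀ w : S, (1/2:ℝ) * ∑ z, π z * |(p ^ t) x w - (p ^ t) z w|
            = ∑ z, π z * ((1/2) * |(p ^ t) x w - (p ^ t) z w|) := by
          intro w
          rw [Finset.mul_sum]
          exact Finset.sum_congr rfl fun z _ => by ring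
        rw [Finset.mul_sum, Finset.sum_congr rfl fun w _ => e1 w, Finset.sum_comm]
        refine Finset.sum_congr rfl fun z _ => ?_
        rw [pairDist, ← mul_assoc, Finset.mul_sum]
        exact Finset.sum_congr rfl fun w _ => by ring
    _ ≤ ∑ z, π z * Dmax p t := by
        refine Finset.sum_le_sum fun z _ => ?_
        exact mul_le_mul_of_nonneg_left (pairDist_le_Dmax p t x z) (hst.1 z)
    _ = Dmax p t := by rw [← Finset.sum_mul, hst.2.1, one_mul]

lemma pairDist_submult (hp : IsStochastic p) (s t : ℕ) (a b : S) :
    pairDist p (s + t) a b ≤ pairDist p s a b * Dmax p t := by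
  set A : S → ℝ := fun v => max ((p ^ s) a v - (p ^ s) b v) 0 with hA
  set B : S → ℝ := fun v => max (-((p ^ s) a v - (p ^ s) b v)) 0 with hB
  have hA0 : ∀ v, 0 ≤ A v := fun v => le_max_right _ _
  have hB0 : ∀ v, 0 ≤ B v := fun v => le_max_right _ _
  have hab : ∀ v, (p ^ s) a v - (p ^ s) b v = A v - B v := fun v =>
    (max_zero_sub_max_neg_zero_eq_self _).symm
  have habs : ∀ v, |(p ^ s) a v - (p ^ s) b v| = A v + B v := fun v =>
    (max_zero_add_max_neg_zero_eq_abs_self _).symm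
  set β : ℝ := pairDist p s a b with hβ
  have hsum0 : ∑ v, ((p ^ s) a v - (p ^ s) b v) = 0 := by
    rw [Finset.sum_sub_distrib, pow_rowsum hp s a, pow_rowsum hp s b, sub_self]
  have hsumAB : ∑ v, A v + ∑ v, B v = 2 * β := by
    rw [hβ, pairDist, ← Finset.sum_add_distrib]
    rw [Finset.sum_congr rfl fun v _ => (habs v).symm]
    ring
  have hsumA : ∑ v, A v = β := by
    have h1 : ∑ v, A v - ∑ v, B v = 0 := by
      rw [← Finset.sum_sub_distrib, Finset.sum_congr rfl fun v _ => (hab v).symm, hsum0]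
    linarith
  have hsumB : ∑ v, B v = β := by linarith
  have hkey : ∀ w, (p ^ (s + t)) a w - (p ^ (s + t)) b w
      = ∑ v, ((p ^ s) a v - (p ^ s) b v) * (p ^ t) v w := by
    intro w
    rw [pow_add, Matrix.mul_apply, Matrix.mul_apply, ← Finset.sum_sub_distrib]
    refine Finset.sum_congr rfl fun v _ => ?_
    ring
  rcases eq_or_lt_of_le (pairDist_nonneg p s a b) with h0 | hpos
  · -- β = 0 : all differences vanish
    have hz : ∀ v, (p ^ s) a v - (p ^ s) b v = 0 := by
      intro v
      have hs2 : ∑ v, |(p ^ s) a v - (p ^ s) b v| = 0 := by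
        have : (1/2 : ℝ) * ∑ v, |(p ^ s) a v - (p ^ s) b v| = 0 := by
          rw [← pairDist]; exact h0.symm
        linarith
      have := (Finset.sum_eq_zero_iff_of_nonneg
        (fun v _ => abs_nonneg ((p ^ s) a v - (p ^ s) b v))).mp hs2 v (Finset.mem_univ v)
      exact abs_eq_zero.mp this
    have hzz : ∀ w : S, |(p ^ (s + t)) a w - (p ^ (s + t)) b w| = 0 := by
      intro w
      rw [hkey w, show (∑ v, ((p ^ s) a v - (p ^ s) b v) * (p ^ t) v w) = 0 from
        Finset.sum_eq_zero fun v _ => by rw [hz v, zero_mul], abs_zero]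
    have hP : pairDist p (s + t) a b = 0 := by
      rw [pairDist, Finset.sum_congr rfl fun w _ => hzz w, Finset.sum_const_zero, mul_zero]
    rw [hP]
    exact mul_nonneg (pairDist_nonneg p s a b) (Dmax_nonneg p t)
  · have hβne : β ≠ 0 := ne_of_gt hpos
    have hkey2 : ∀ w, ∑ v, ((p ^ s) a v - (p ^ s) b v) * (p ^ t) v w
        = β⁻¹ * ∑ v, ∑ v', A v * B v' * ((p ^ t) v w - (p ^ t) v' w) := by
      intro w
      have hdd : ∑ v, ∑ v', A v * B v' * ((p ^ t) v w - (p ^ t) v' w)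
          = (∑ v, A v * (p ^ t) v w) * (∑ v', B v')
            - (∑ v, A v) * (∑ v', B v' * (p ^ t) v' w) := by
        rw [Finset.sum_mul_sum, Finset.sum_mul_sum, ← Finset.sum_sub_distrib]
        refine Finset.sum_congr rfl fun v _ => ?_
        rw [← Finset.sum_sub_distrib]
        refine Finset.sum_congr rfl fun v' _ => ?_
        ring
      rw [hdd, hsumA, hsumB]
      rw [show (∑ v, A v * (p ^ t) v w) * β - β * (∑ v', B v' * (p ^ t) v' w)
          = β * ((∑ v, A v * (p ^ t) v w) - (∑ v', B v' * (p ^ t) v' w)) by ring]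
      rw [← mul_assoc, inv_mul_cancel₀ hβne, one_mul, ← Finset.sum_sub_distrib]
      refine Finset.sum_congr rfl fun v _ => ?_
      rw [hab v]
      ring
    calc pairDist p (s + t) a b
        = (1/2) * ∑ w, |β⁻¹ * ∑ v, ∑ v', A v * B v' * ((p ^ t) v w - (p ^ t) v' w)| := by
          rw [pairDist]
          refine congrArg _ (Finset.sum_congr rfl fun w _ => ?_)
          rw [hkey w, hkey2 w]
      _ ≤ (1/2) * ∑ w, β⁻¹ * ∑ v, ∑ v', A v * B v' * |(p ^ t) v w - (p ^ t) v' w| := by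
          have hterm : ∀ w, |β⁻¹ * ∑ v, ∑ v', A v * B v' * ((p ^ t) v w - (p ^ t) v' w)|
              ≤ β⁻¹ * ∑ v, ∑ v', A v * B v' * |(p ^ t) v w - (p ^ t) v' w| := by
            intro w
            rw [abs_mul, abs_of_nonneg (inv_nonneg.mpr hpos.le)]
            refine mul_le_mul_of_nonneg_left ?_ (inv_nonneg.mpr hpos.le)
            refine le_trans (Finset.abs_sum_le_sum_abs _ _) ?_
            refine Finset.sum_le_sum fun v _ => ?_
            refine le_trans (Finset.abs_sum_le_sum_abs _ _) ?_
            refine Finset.sum_le_sum fun v' _ => ?_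
            rw [abs_mul, abs_of_nonneg (mul_nonneg (hA0 v) (hB0 v'))]
          have h2 := Finset.sum_le_sum fun w (_ : w ∈ Finset.univ) => hterm w
          linarith
      _ = β⁻¹ * ∑ v, ∑ v', A v * B v' * ((1/2) * ∑ w, |(p ^ t) v w - (p ^ t) v' w|) := by
          simp only [Finset.mul_sum]
          rw [Finset.sum_comm]
          refine Finset.sum_congr rfl fun v _ => ?_
          rw [Finset.sum_comm]
          exact Finset.sum_congr rfl fun v' _ => Finset.sum_congr rfl fun w _ => by ring
      _ ≤ β⁻¹ * ∑ v, ∑ v', A v * B v' * Dmax p t := by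
          refine mul_le_mul_of_nonneg_left ?_ (inv_nonneg.mpr hpos.le)
          refine Finset.sum_le_sum fun v _ => Finset.sum_le_sum fun v' _ => ?_
          refine mul_le_mul_of_nonneg_left ?_ (mul_nonneg (hA0 v) (hB0 v'))
          exact pairDist_le_Dmax p t v v'
      _ = β * Dmax p t := by
          rw [show ∑ v, ∑ v', A v * B v' * Dmax p t
              = (∑ v, A v) * (∑ v', B v') * Dmax p t by
            rw [Finset.sum_mul_sum, Finset.sum_mul]
            refine Finset.sum_congr rfl fun v _ => ?_
            rw [Finset.sum_mul]]
          rw [hsumA, hsumB, ← mul_assoc, ← mul_assoc, inv_mul_cancel₀ hβne, one_mul]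

lemma Dmax_submult (hp : IsStochastic p) (s t : ℕ) :
    Dmax p (s + t) ≤ Dmax p s * Dmax p t := by
  refine Finset.sup'_le _ _ fun q _ => ?_
  calc pairDist p (s + t) q.1 q.2 ≤ pairDist p s q.1 q.2 * Dmax p t :=
        pairDist_submult hp s t q.1 q.2
    _ ≤ Dmax p s * Dmax p t :=
        mul_le_mul_of_nonneg_right (pairDist_le_Dmax p s q.1 q.2) (Dmax_nonneg p t)

lemma Dmax_T_le_half (hp : IsStochastic p) (hst : IsStationaryDistr p π) (T : ℕ)
    (h4 : ∀ z : S, tvDist p π z T ≤ 1 / 4) : Dmax p T ≤ 1 / 2 := by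
  refine Finset.sup'_le _ _ fun q _ => ?_
  have h1 : pairDist p T q.1 q.2 ≤ tvDist p π q.1 T + tvDist p π q.2 T := by
    rw [pairDist, tvDist, tvDist, ← mul_add, ← Finset.sum_add_distrib]
    refine mul_le_mul_of_nonneg_left (Finset.sum_le_sum fun w _ => ?_) (by norm_num)
    calc |(p ^ T) q.1 w - (p ^ T) q.2 w|
        = |((p ^ T) q.1 w - π w) + (π w - (p ^ T) q.2 w)| := by ring_nf
      _ ≤ |(p ^ T) q.1 w - π w| + |π w - (p ^ T) q.2 w| := abs_add_le _ _
      _ = |(p ^ T) q.1 w - π w| + |(p ^ T) q.2 w - π w| := by rw [abs_sub_comm (π w)]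
  calc pairDist p T q.1 q.2 ≤ tvDist p π q.1 T + tvDist p π q.2 T := h1
    _ ≤ 1 / 4 + 1 / 4 := add_le_add (h4 q.1) (h4 q.2)
    _ = 1 / 2 := by norm_num

lemma Dmax_mul_le (hp : IsStochastic p) (hst : IsStationaryDistr p π) (T : ℕ)
    (h4 : ∀ z : S, tvDist p π z T ≤ 1 / 4) (k : ℕ) :
    Dmax p (T * k) ≤ (1 / 2) ^ k := by
  induction k with
  | zero => rw [Nat.mul_zero, pow_zero]; exact Dmax_le_one hp 0
  | succ k ih =>
    have : T * (k + 1) = T * k + T := by ring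
    rw [this, pow_succ]
    calc Dmax p (T * k + T) ≤ Dmax p (T * k) * Dmax p T := Dmax_submult hp _ _
      _ ≤ (1 / 2) ^ k * (1 / 2) := by
          refine mul_le_mul ih (Dmax_T_le_half hp hst T h4) (Dmax_nonneg p T) ?_
          positivity

lemma tv_mul_le (hp : IsStochastic p) (hst : IsStationaryDistr p π) (T : ℕ)
    (h4 : ∀ z : S, tvDist p π z T ≤ 1 / 4) (k : ℕ) (x : S) :
    tvDist p π x (T * k) ≤ (1 / 2) ^ k :=
  le_trans (tv_le_Dmax hst x (T * k)) (Dmax_mul_le hp hst T h4 k)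

end Pair

end Aux

/-- Proposition 6: if `P_z(τ(y) = u) ≤ ψ(u)` for all states `z, y` and `u > 0`, then
`P_x(τ(y) = t) ≤ d_x(s) ψ(t - s) + 1/(t - s)` for `0 < s < t`; moreover, whenever the
mixing time `t_mix(1/4)` exists and `t > 2 t_mix(1/4) ⌈log₂ n⌉`, `P_x(τ(y) = t) ≤ 4/t`. -/
theorem mixing_time_surprise_bound {S : Type*} [Fintype S] [DecidableEq S]
    (p : Matrix S S ℝ) (π : S → ℝ) (hp : IsStochastic p) (hstat : IsStationaryDistr p π)
    (ψ : ℕ → ℝ) (hψ : ∀ (z y : S) (u : ℕ), 0 < u → hitProbEq p z y u ≤ ψ u)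
    (x y : S) :
    (∀ s t : ℕ, 0 < s → s < t →
        hitProbEq p x y t ≤ tvDist p π x s * ψ (t - s) + 1 / ((t - s : ℕ) : ℝ)) ∧
      ((∃ T : ℕ, ∀ z : S, tvDist p π z T ≤ 1 / 4) →
        ∀ t : ℕ,
          2 * sInf {T : ℕ | ∀ z : S, tvDist p π z T ≤ 1 / 4} *
              Nat.clog 2 (Fintype.card S) < t →
            hitProbEq p x y t ≤ 4 / t) := by
  have hNe : Nonempty S := ⟨x⟩
  constructor
  · intro s t hs hst'
    have hm : 0 < t - s := by omega
    have hts : s + (t - s) = t := by omega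
    have hB : ∀ z, hitProbEq p z y (t - s) ≤ ψ (t - s) := fun z => hψ z y (t - s) hm
    have hcore := core_bound hp hstat x y s (t - s) hm (ψ (t - s)) hB
      (le_trans (hitProbEq_nonneg hp.1 x y (t - s)) (hB x))
    rwa [hts] at hcore
  · intro hex t ht
    obtain ⟨T₀, hT₀⟩ := hex
    have hmem : ∀ z : S, tvDist p π z (sInf {T : ℕ | ∀ z : S, tvDist p π z T ≤ 1 / 4}) ≤ 1 / 4 :=
      Nat.sInf_mem (⟨T₀, hT₀⟩ : {T : ℕ | ∀ z : S, tvDist p π z T ≤ 1 / 4}.Nonempty)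
    set T := sInf {T : ℕ | ∀ z : S, tvDist p π z T ≤ 1 / 4} with hTdef
    set k := Nat.clog 2 (Fintype.card S) with hkdef
    set n := Fintype.card S with hndef
    rcases Nat.lt_or_ge n 2 with hn1 | hn2
    · -- the one-state case
      have hxy : x = y := by
        have hss : Subsingleton S := by
          refine Fintype.card_le_one_iff_subsingleton.mp ?_
          omega
        exact Subsingleton.elim x y
      have hk0 : k = 0 := by
        have hcard1 : n = 1 := by
          have : 0 < n := Fintype.card_pos_iff.mpr ⟨x⟩
          omega
        rw [hkdef, hcard1, Nat.clog_one_right]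
      have ht0 : 0 < t := by
        rw [hk0] at ht
        omega
      obtain ⟨m, rfl⟩ : ∃ m, t = m + 1 := ⟨t - 1, by omega⟩
      have h0 : hitProbEq p x y (m + 1) = 0 := by
        rw [hitProbEq_succ, if_pos hxy]
      rw [h0]
      positivity
    · -- the main case
      have hπle1 : ∀ w, π w ≤ 1 := by
        intro w
        have h1 := Finset.single_le_sum (fun i (_ : i ∈ Finset.univ) => hstat.1 i)
          (Finset.mem_univ w)
        rw [hstat.2.1] at h1
        exact h1
      have hk1 : 1 ≤ k := Nat.clog_pos one_lt_two hn2
      have hT1 : 1 ≤ T := by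
        by_contra hcon
        have hT0 : T = 0 := by omega
        have h34 : ∀ z : S, (3 : ℝ) / 4 ≤ π z := by
          intro z
          have hz := hmem z
          rw [hT0] at hz
          have htv : tvDist p π z 0 = 1 - π z := by
            rw [tvDist, pow_zero]
            have hterm : ∀ w, |(1 : Matrix S S ℝ) z w - π w|
                = π w + (if z = w then 1 - 2 * π w else 0) := by
              intro w
              rw [Matrix.one_apply]
              split_ifs with h
              · rw [abs_of_nonneg (by linarith [hπle1 w])]; ring
              · rw [zero_sub, abs_neg, abs_of_nonneg (hstat.1 w)]; ring
            rw [Finset.sum_congr rfl fun w _ => hterm w, Finset.sum_add_distrib, hstat.2.1,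
              Finset.sum_ite_eq Finset.univ z, if_pos (Finset.mem_univ z)]
            ring
          rw [htv] at hz
          linarith
        have hsum : (3 : ℝ) / 4 * n ≤ ∑ z, π z := by
          calc (3 : ℝ) / 4 * n = ∑ _z : S, (3 : ℝ) / 4 := by
                rw [Finset.sum_const, nsmul_eq_mul, Finset.card_univ, ← hndef]
                ring
            _ ≤ ∑ z, π z := Finset.sum_le_sum fun z _ => h34 z
        rw [hstat.2.1] at hsum
        have h2n : (2 : ℝ) ≤ (n : ℝ) := by exact_mod_cast hn2
        nlinarith
      have hs1 : 1 ≤ T * k := Nat.one_le_iff_ne_zero.mpr (by positivity)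
      have hslt : 2 * (T * k) < t := by
        rw [← mul_assoc]
        exact ht
      set s := T * k with hsdef
      set m := t - s with hmdef
      have hm1 : 0 < m := by omega
      have hts : s + m = t := by omega
      have htle : t ≤ 2 * m := by omega
      have hBz : ∀ z, hitProbEq p z y m ≤ (n : ℝ) / m := fun z =>
        hit_le_card_div hp z y m hm1
      have hn0 : (0 : ℝ) < n := by
        have : (2 : ℝ) ≤ (n : ℝ) := by exact_mod_cast hn2
        linarith
      have hm0 : (0 : ℝ) < m := by exact_mod_cast hm1
      have ht0 : (0 : ℝ) < t := by
        have : 0 < t := by omega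
        exact_mod_cast this
      have hcore := core_bound hp hstat x y s m hm1 ((n : ℝ) / m) hBz
        (le_of_lt (div_pos hn0 hm0))
      rw [hts] at hcore
      have htv : tvDist p π x s ≤ 1 / (n : ℝ) := by
        refine le_trans (tv_mul_le hp hstat T hmem k x) ?_
        have h2k : (n : ℝ) ≤ 2 ^ k := by
          exact_mod_cast Nat.le_pow_clog one_lt_two n
        rw [show ((1 : ℝ) / 2) ^ k = 1 / 2 ^ k by rw [div_pow, one_pow]]
        exact one_div_le_one_div_of_le hn0 h2k
      have hmain : hitProbEq p x y t ≤ 2 / m := by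
        have h1 : tvDist p π x s * ((n : ℝ) / m) ≤ (1 / n) * ((n : ℝ) / m) :=
          mul_le_mul_of_nonneg_right htv (le_of_lt (div_pos hn0 hm0))
        have h2 : (1 / (n : ℝ)) * ((n : ℝ) / m) = 1 / m := by
          field_simp
        have h3 : hitProbEq p x y t ≤ 1 / m + 1 / m := by
          rw [← h2]
          linarith
        calc hitProbEq p x y t ≤ 1 / (m : ℝ) + 1 / m := h3
          _ = 2 / m := by ring
      calc hitProbEq p x y t ≤ 2 / m := hmain
        _ ≤ 4 / t := by
            rw [div_le_div_iff₀ hm0 ht0]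
            have : (t : ℝ) ≤ 2 * m := by exact_mod_cast htle
            linarith
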